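/- Let (M,P,g) be a Riemannian W₃-manifold and ∇̃ the Levi-Civita connection of the associated metric g̃(x,y) = g(x,Py). Then (∇̃ₓP)y = (∇_{Px}P)Py, and consequently F̃(x,y,z) := g̃((∇̃ₓP)y,z) = −F(Px,y,z). -/
import Mathlib


/-- Let `(M,P,g)` be a Riemannian `W₃`-manifold and `∇̃` the Levi-Civita
connection of the associated metric `g̃(x,y) = g(x,Py)`.  Then
`(∇̃ₓP)y = (∇_{Px}P)Py`, and consequently
`F̃(x,y,z) := g̃((∇̃ₓP)y, z) = −F(Px,y,z)`.
(The `W₃` condition is equivalent to `N̄ = 0`, and `∇̃` satisfies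
`∇̃ₓy = ∇ₓy − (∇ₓP)Py − (∇_yP)Px`.) -/
theorem associated_nablaP_and_F
    {X : Type*} [AddCommGroup X] [Module ℝ X]
    (g : X →ₗ[ℝ] X →ₗ[ℝ] ℝ) (P : X →ₗ[ℝ] X)
    (nabla tnabla : X → X → X) (D : X → ℝ → ℝ)
    (hgsymm : ∀ x y : X, g x y = g y x)
    (hP2 : ∀ x : X, P (P x) = x)
    (hPg : ∀ x y : X, g (P x) (P y) = g x y)
    (hcompat : ∀ x y z : X, D x (g y z) = g (nabla x y) z + g y (nabla x z)) :
    let nablaP : X → X → X := fun x y => nabla x (P y) - P (nabla x y)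
    let F : X → X → X → ℝ := fun x y z => g (nablaP x y) z
    let tnablaP : X → X → X := fun x y => tnabla x (P y) - P (tnabla x y)
    let gt : X → X → ℝ := fun x y => g x (P y)
    let Ft : X → X → X → ℝ := fun x y z => gt (tnablaP x y) z
    -- the W₃ condition
    (∀ x y z : X, F x y z + F y z x + F z x y = 0) →
    -- the vanishing of N̄, equivalent to the W₃ condition
    (∀ x y : X, nablaP x (P y) + nablaP (P x) y + nablaP y (P x) + nablaP (P y) x = 0) →
    -- the formula for the associated Levi-Civita connection
    (∀ x y : X, tnabla x y = nabla x y - nablaP x (P y) - nablaP y (P x)) →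
    (∀ x y : X, tnablaP x y = nablaP (P x) (P y)) ∧
    (∀ x y z : X, Ft x y z = - F (P x) y z) := by
  intro nablaP F tnablaP gt Ft hW3 hN hLC
  have h1 : ∀ x y : X, tnablaP x y = nablaP (P x) (P y) := by
    intro x y
    have hNxy := hN (P x) y
    simp only [nablaP, hP2, map_sub] at hNxy ⊢
    simp only [tnablaP, hLC, nablaP, hP2, map_sub]
    have := hNxy
    abel_nf at this ⊢
    linear_combination (norm := abel) -this
  refine ⟨h1, fun x y z => ?_⟩
  have hanti : ∀ x y : X, P (nablaP x y) = - nablaP x (P y) := by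
    intro x y
    simp only [nablaP, map_sub, hP2]
    abel
  have h2 : nablaP (P x) (P y) = - P (nablaP (P x) y) := by
    rw [hanti, neg_neg]
  simp only [Ft, gt, h1, h2, map_neg, LinearMap.neg_apply, hPg, F]
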